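/- The Fock space of semi-infinite forms is an irreducible module over the infinite Clifford algebra: every nonzero ℂ-subspace of F that is invariant under all creation operators v_a and all annihilation operators w_a (a ∈ H) equals F. -/

import Mathlib

open scoped Classical

/-- The set of half-integers `H = ℤ + 1/2`. -/
def HalfInt : Set ℚ := {q | ∃ n : ℤ, q = (n : ℚ) + 1/2}

/-- The negative half-integers `H⁻`. -/
def Hneg : Set ℚ := {q | q ∈ HalfInt ∧ q < 0}

/-- The positive half-integers `H⁺`. -/
def Hpos : Set ℚ := {q | q ∈ HalfInt ∧ 0 < q}

/-- A Maya diagram: a set of half-integers whose symmetric difference with `H⁻` is finite. -/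
structure Maya where
  carrier : Set ℚ
  subset_halfInt : carrier ⊆ HalfInt
  finite_symmDiff : (symmDiff carrier Hneg).Finite

/-- The Fock space of semi-infinite forms: the free ℂ-vector space on Maya diagrams. -/
abbrev Fock : Type := Maya →₀ ℂ

lemma symmDiff_insert_subset (a : ℚ) (S T : Set ℚ) :
    symmDiff (insert a S) T ⊆ insert a (symmDiff S T) := by
  intro x hx
  simp only [Set.mem_symmDiff, Set.mem_insert_iff] at *
  tauto

lemma symmDiff_diff_subset (a : ℚ) (S T : Set ℚ) :
    symmDiff (S \ {a}) T ⊆ insert a (symmDiff S T) := by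
  intro x hx
  simp only [Set.mem_symmDiff, Set.mem_insert_iff, Set.mem_diff,
    Set.mem_singleton_iff] at *
  tauto

/-- Adding a half-integer to a Maya diagram. -/
def Maya.insertCell (M : Maya) (a : ℚ) (ha : a ∈ HalfInt) : Maya where
  carrier := insert a M.carrier
  subset_halfInt := by
    intro x hx
    rcases hx with rfl | hx
    · exact ha
    · exact M.subset_halfInt hx
  finite_symmDiff :=
    Set.Finite.subset (M.finite_symmDiff.insert a) (symmDiff_insert_subset a _ _)

/-- Removing a half-integer from a Maya diagram. -/
def Maya.eraseCell (M : Maya) (a : ℚ) : Maya where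
  carrier := M.carrier \ {a}
  subset_halfInt := fun _ hx => M.subset_halfInt hx.1
  finite_symmDiff :=
    Set.Finite.subset (M.finite_symmDiff.insert a) (symmDiff_diff_subset a _ _)

/-- The sign `(-1)^{#{x ∈ S : x > a}}`. -/
noncomputable def sgn (S : Set ℚ) (a : ℚ) : ℂ := (-1) ^ (S ∩ Set.Ioi a).ncard

/-- The creation operator `v_a` (exterior multiplication by `v_a`). -/
noncomputable def creation (a : ↥HalfInt) : Fock →ₗ[ℂ] Fock :=
  Finsupp.lift Fock ℂ Maya fun M =>
    if (a : ℚ) ∈ M.carrier then 0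
    else sgn M.carrier a • Finsupp.single (M.insertCell a a.2) 1

/-- The annihilation operator `w_a` (contraction by `w_a`). -/
noncomputable def annihilation (a : ↥HalfInt) : Fock →ₗ[ℂ] Fock :=
  Finsupp.lift Fock ℂ Maya fun M =>
    if (a : ℚ) ∈ M.carrier then sgn M.carrier a • Finsupp.single (M.eraseCell a) 1
    else 0

/-! ### Auxiliary lemmas -/

lemma Maya.ext' {M N : Maya} (h : M.carrier = N.carrier) : M = N := by
  cases M; cases N; simp_all

lemma sgn_mul_self (S : Set ℚ) (a : ℚ) : sgn S a * sgn S a = 1 := by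
  unfold sgn
  rw [← mul_pow]
  norm_num

lemma sgn_diff (S : Set ℚ) (a : ℚ) : sgn (S \ {a}) a = sgn S a := by
  unfold sgn
  have hset : (S \ {a}) ∩ Set.Ioi a = S ∩ Set.Ioi a := by
    ext x
    simp only [Set.mem_inter_iff, Set.mem_diff, Set.mem_singleton_iff, Set.mem_Ioi]
    constructor
    · tauto
    · rintro ⟨hS, hlt⟩
      exact ⟨⟨hS, fun h => by simp [h] at hlt⟩, hlt⟩
  rw [hset]

lemma sgn_insert (S : Set ℚ) (a : ℚ) : sgn (insert a S) a = sgn S a := by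
  unfold sgn
  have hset : (insert a S) ∩ Set.Ioi a = S ∩ Set.Ioi a := by
    ext x
    simp only [Set.mem_inter_iff, Set.mem_insert_iff, Set.mem_Ioi]
    constructor
    · rintro ⟨rfl | hS, hlt⟩
      · exact absurd hlt (lt_irrefl _)
      · exact ⟨hS, hlt⟩
    · tauto
  rw [hset]

lemma lift_single (f : Maya → Fock) (M : Maya) (c : ℂ) :
    Finsupp.lift Fock ℂ Maya f (Finsupp.single M c) = c • f M := by
  simp [Finsupp.lift_apply, Finsupp.sum_single_index]

lemma creation_single (a : ↥HalfInt) (M : Maya) (c : ℂ) :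
    creation a (Finsupp.single M c) =
      if (a : ℚ) ∈ M.carrier then 0
      else (c * sgn M.carrier a) • Finsupp.single (M.insertCell a a.2) 1 := by
  unfold creation
  rw [lift_single]
  split <;> simp [mul_smul]

lemma annihilation_single (a : ↥HalfInt) (M : Maya) (c : ℂ) :
    annihilation a (Finsupp.single M c) =
      if (a : ℚ) ∈ M.carrier then (c * sgn M.carrier a) • Finsupp.single (M.eraseCell a) 1
      else 0 := by
  unfold annihilation
  rw [lift_single]
  split <;> simp [mul_smul]

lemma ca_single (a : ↥HalfInt) (M : Maya) (c : ℂ) :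
    creation a (annihilation a (Finsupp.single M c)) =
      if (a : ℚ) ∈ M.carrier then Finsupp.single M c else 0 := by
  rw [annihilation_single]
  split
  · next h =>
    rw [map_smul, creation_single]
    have hnm : (a : ℚ) ∉ (M.eraseCell a).carrier := by
      simp [Maya.eraseCell]
    rw [if_neg hnm]
    have hM : (M.eraseCell a).insertCell a a.2 = M := by
      apply Maya.ext'
      simp only [Maya.insertCell, Maya.eraseCell]
      rw [Set.insert_diff_singleton, Set.insert_eq_of_mem h]
    have hs : sgn (M.eraseCell a).carrier (a : ℚ) = sgn M.carrier a := by
      simpa [Maya.eraseCell] using sgn_diff M.carrier a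
    rw [hM, hs, smul_smul, one_mul, mul_assoc, sgn_mul_self, mul_one,
      Finsupp.smul_single, smul_eq_mul, mul_one]
  · simp

lemma ac_single (a : ↥HalfInt) (M : Maya) (c : ℂ) :
    annihilation a (creation a (Finsupp.single M c)) =
      if (a : ℚ) ∈ M.carrier then 0 else Finsupp.single M c := by
  rw [creation_single]
  split
  · simp
  · next h =>
    rw [map_smul, annihilation_single]
    have hm : (a : ℚ) ∈ (M.insertCell a a.2).carrier := by
      simp [Maya.insertCell]
    rw [if_pos hm]
    have hM : (M.insertCell a a.2).eraseCell a = M := by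
      apply Maya.ext'
      simp only [Maya.insertCell, Maya.eraseCell]
      exact Set.insert_diff_self_of_notMem h
    have hs : sgn (M.insertCell a a.2).carrier (a : ℚ) = sgn M.carrier a := by
      simpa [Maya.insertCell] using sgn_insert M.carrier a
    rw [hM, hs, smul_smul, one_mul, mul_assoc, sgn_mul_self, mul_one,
      Finsupp.smul_single, smul_eq_mul, mul_one]

lemma ca_eq_filter (a : ↥HalfInt) (x : Fock) :
    creation a (annihilation a x) = x.filter (fun K => (a : ℚ) ∈ K.carrier) := by
  induction x using Finsupp.induction_linear with
  | zero => simp [Finsupp.filter_zero]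
  | add f g hf hg => rw [map_add, map_add, Finsupp.filter_add, hf, hg]
  | single M c =>
    rw [ca_single]
    split
    · next h => exact (Finsupp.filter_single_of_pos (p := fun K : Maya => (a : ℚ) ∈ K.carrier) h).symm
    · next h => exact (Finsupp.filter_single_of_neg (p := fun K : Maya => (a : ℚ) ∈ K.carrier) h).symm

lemma ac_eq_filter (a : ↥HalfInt) (x : Fock) :
    annihilation a (creation a x) = x.filter (fun K => (a : ℚ) ∉ K.carrier) := by
  induction x using Finsupp.induction_linear with
  | zero => simp [Finsupp.filter_zero]
  | add f g hf hg => rw [map_add, map_add, Finsupp.filter_add, hf, hg]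
  | single M c =>
    rw [ac_single]
    split
    · next h =>
      exact (Finsupp.filter_single_of_neg (p := fun K : Maya => (a : ℚ) ∉ K.carrier) (by simpa using h)).symm
    · next h => exact (Finsupp.filter_single_of_pos (p := fun K : Maya => (a : ℚ) ∉ K.carrier) h).symm

lemma symmDiff_carrier_finite (M N : Maya) :
    (symmDiff M.carrier N.carrier).Finite := by
  apply (M.finite_symmDiff.union N.finite_symmDiff).subset
  intro x hx
  simp only [Set.mem_symmDiff, Set.mem_union] at *
  tauto

lemma mem_halfInt_of_symmDiff {M N : Maya} {a : ℚ}
    (h : a ∈ symmDiff M.carrier N.carrier) : a ∈ HalfInt := by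
  rw [Set.mem_symmDiff] at h
  rcases h with ⟨h, _⟩ | ⟨h, _⟩
  · exact M.subset_halfInt h
  · exact N.subset_halfInt h

/-- Step 1: a nonzero invariant subspace contains some basis vector. -/
lemma exists_single_mem (p : Submodule ℂ Fock)
    (hcr : ∀ (a : ↥HalfInt) (x : Fock), x ∈ p → creation a x ∈ p)
    (han : ∀ (a : ↥HalfInt) (x : Fock), x ∈ p → annihilation a x ∈ p) :
    ∀ n : ℕ, ∀ x : Fock, x ∈ p → x ≠ 0 → x.support.card ≤ n →
      ∃ M : Maya, Finsupp.single M (1 : ℂ) ∈ p := by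
  intro n
  induction n with
  | zero =>
    intro x hx hne hcard
    exact absurd (Finsupp.support_eq_empty.1 (Finset.card_eq_zero.1 (Nat.le_zero.1 hcard))) hne
  | succ n ih =>
    intro x hx hne hcard
    obtain ⟨M, hM⟩ := Finsupp.support_nonempty_iff.2 hne
    by_cases hsub : x.support ⊆ {M}
    · refine ⟨M, ?_⟩
      have hxM : x = Finsupp.single M (x M) := (Finsupp.support_subset_singleton.1 hsub)
      have hxM0 : x M ≠ 0 := Finsupp.mem_support_iff.1 hM
      have h2 : (x M)⁻¹ • x ∈ p := p.smul_mem _ hx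
      rw [hxM] at h2
      simp only [Finsupp.single_eq_same] at h2
      rw [Finsupp.smul_single, smul_eq_mul, inv_mul_cancel₀ hxM0] at h2
      exact h2
    · obtain ⟨N, hN, hNM⟩ : ∃ N ∈ x.support, N ≠ M := by
        by_contra hcon
        push_neg at hcon
        exact hsub fun K hK => Finset.mem_singleton.2 (hcon K hK)
      have hcarr : M.carrier ≠ N.carrier := fun h => hNM (Maya.ext' h.symm)
      obtain ⟨a, ha⟩ : (symmDiff M.carrier N.carrier).Nonempty := by
        rw [Set.nonempty_iff_ne_empty]
        intro h
        exact hcarr (by simpa [symmDiff_eq_bot] using h)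
      set ahat : ↥HalfInt := ⟨a, mem_halfInt_of_symmDiff ha⟩
      rw [Set.mem_symmDiff] at ha
      -- define the projected vector
      set y : Fock := if (a : ℚ) ∈ M.carrier
        then creation ahat (annihilation ahat x) else annihilation ahat (creation ahat x) with hy
      have hyp : y ∈ p := by
        rw [hy]; split
        · exact hcr ahat _ (han ahat _ hx)
        · exact han ahat _ (hcr ahat _ hx)
      have hyM : y M = x M := by
        rw [hy]; split
        · next h =>
          rw [ca_eq_filter]
          simp [Finsupp.filter_apply, h, show (ahat : ℚ) = a from rfl]
        · next h =>
          rw [ac_eq_filter]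
          simp [Finsupp.filter_apply, h, show (ahat : ℚ) = a from rfl]
      have hyN : y N = 0 := by
        have haN : ((a : ℚ) ∈ M.carrier ↔ (a : ℚ) ∉ N.carrier) := by tauto
        rw [hy]; split
        · next h =>
          rw [ca_eq_filter]
          simp [Finsupp.filter_apply, haN.1 h, show (ahat : ℚ) = a from rfl]
        · next h =>
          rw [ac_eq_filter]
          have : (a : ℚ) ∈ N.carrier := by tauto
          simp [Finsupp.filter_apply, this, show (ahat : ℚ) = a from rfl]
      have hysup : y.support ⊆ x.support := by
        rw [hy]; split
        · rw [ca_eq_filter, Finsupp.support_filter]; exact Finset.filter_subset _ _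
        · rw [ac_eq_filter, Finsupp.support_filter]; exact Finset.filter_subset _ _
      have hyne : y ≠ 0 := by
        intro h
        have := hyM
        rw [h] at this
        exact Finsupp.mem_support_iff.1 hM this.symm
      have hcard' : y.support.card ≤ n := by
        have hsub' : y.support ⊆ x.support.erase N := by
          intro K hK
          rcases eq_or_ne K N with rfl | hKN
          · exact absurd (Finsupp.mem_support_iff.1 hK) (by simp [hyN])
          · exact Finset.mem_erase.2 ⟨hKN, hysup hK⟩
        calc y.support.card ≤ (x.support.erase N).card := Finset.card_le_card hsub'
          _ = x.support.card - 1 := Finset.card_erase_of_mem hN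
          _ ≤ n := by omega
      exact ih y hyp hyne hcard'

/-- Step 2: from one basis vector we can reach any other. -/
lemma single_mem_all (p : Submodule ℂ Fock)
    (hcr : ∀ (a : ↥HalfInt) (x : Fock), x ∈ p → creation a x ∈ p)
    (han : ∀ (a : ↥HalfInt) (x : Fock), x ∈ p → annihilation a x ∈ p) :
    ∀ n : ℕ, ∀ M N : Maya, Finsupp.single M (1 : ℂ) ∈ p →
      (symmDiff M.carrier N.carrier).ncard = n → Finsupp.single N (1 : ℂ) ∈ p := by
  intro n
  induction n with
  | zero =>
    intro M N hM hn
    have hfin := symmDiff_carrier_finite M N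
    have : symmDiff M.carrier N.carrier = ∅ := (Set.ncard_eq_zero hfin).1 hn
    have : M = N := Maya.ext' (by simpa [symmDiff_eq_bot] using this)
    rwa [this] at hM
  | succ n ih =>
    intro M N hM hn
    have hfin := symmDiff_carrier_finite M N
    obtain ⟨a, ha⟩ : (symmDiff M.carrier N.carrier).Nonempty := by
      rw [Set.nonempty_iff_ne_empty]
      intro h
      rw [h] at hn
      simp at hn
    set ahat : ↥HalfInt := ⟨a, mem_halfInt_of_symmDiff ha⟩
    have hmem := ha
    rw [Set.mem_symmDiff] at hmem
    rcases hmem with ⟨haM, haN⟩ | ⟨haN, haM⟩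
    · -- a ∈ M, a ∉ N : erase a from M
      set M' := M.eraseCell a with hM'
      have h1 : annihilation ahat (Finsupp.single M (1 : ℂ)) =
          sgn M.carrier a • Finsupp.single M' 1 := by
        rw [annihilation_single, if_pos haM, one_mul]
      have h2 : Finsupp.single M' (1 : ℂ) ∈ p := by
        have := p.smul_mem (sgn M.carrier a) (han ahat _ hM)
        rw [h1, smul_smul, sgn_mul_self, one_smul] at this
        exact this
      have hsd : symmDiff M'.carrier N.carrier = symmDiff M.carrier N.carrier \ {a} := by
        have hc : M'.carrier = M.carrier \ {a} := rfl
        ext x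
        rw [hc]
        simp only [Set.mem_symmDiff, Set.mem_diff, Set.mem_singleton_iff]
        by_cases hxa : x = a
        · subst hxa; simp [haM, haN]
        · tauto
      have hn' : (symmDiff M'.carrier N.carrier).ncard = n := by
        rw [hsd, Set.ncard_diff_singleton_of_mem ha, hn]
        omega
      exact ih M' N h2 hn'
    · -- a ∈ N, a ∉ M : insert a into M
      set M' := M.insertCell a ahat.2 with hM'
      have h1 : creation ahat (Finsupp.single M (1 : ℂ)) =
          sgn M.carrier a • Finsupp.single M' 1 := by
        rw [creation_single, if_neg haM, one_mul]
      have h2 : Finsupp.single M' (1 : ℂ) ∈ p := by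
        have := p.smul_mem (sgn M.carrier a) (hcr ahat _ hM)
        rw [h1, smul_smul, sgn_mul_self, one_smul] at this
        exact this
      have hsd : symmDiff M'.carrier N.carrier = symmDiff M.carrier N.carrier \ {a} := by
        have hc : M'.carrier = insert a M.carrier := rfl
        ext x
        rw [hc]
        simp only [Set.mem_symmDiff, Set.mem_diff, Set.mem_singleton_iff, Set.mem_insert_iff]
        by_cases hxa : x = a
        · subst hxa; simp [haM, haN]
        · tauto
      have hn' : (symmDiff M'.carrier N.carrier).ncard = n := by
        rw [hsd, Set.ncard_diff_singleton_of_mem ha, hn]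
        omega
      exact ih M' N h2 hn'

/-- the Fock space of semi-infinite forms is an irreducible module
over the infinite Clifford algebra: every nonzero ℂ-subspace of `F` invariant
under all creation operators `v_a` and all annihilation operators `w_a`
(`a ∈ H`) equals `F`. -/
theorem fock_irreducible (p : Submodule ℂ Fock) (hp : p ≠ ⊥)
    (hcr : ∀ (a : ↥HalfInt) (x : Fock), x ∈ p → creation a x ∈ p)
    (han : ∀ (a : ↥HalfInt) (x : Fock), x ∈ p → annihilation a x ∈ p) :
    p = ⊤ := by
  obtain ⟨x, hx, hxne⟩ := Submodule.exists_mem_ne_zero_of_ne_bot hp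
  obtain ⟨M, hM⟩ := exists_single_mem p hcr han x.support.card x hx hxne le_rfl
  have hall : ∀ N : Maya, Finsupp.single N (1 : ℂ) ∈ p := fun N =>
    single_mem_all p hcr han (symmDiff M.carrier N.carrier).ncard M N hM rfl
  rw [eq_top_iff]
  intro y _
  induction y using Finsupp.induction_linear with
  | zero => exact p.zero_mem
  | add f g hf hg => exact p.add_mem (hf trivial) (hg trivial)
  | single N c =>
    have : Finsupp.single N c = c • Finsupp.single N (1 : ℂ) := by
      rw [Finsupp.smul_single, smul_eq_mul, mul_one]
    rw [this]
    exact p.smul_mem c (hall N)
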